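/- Let ν be a Borel probability measure on 𝕋 = ℝ/ℤ, z ∈ 𝕋, and ε ∈ (0, 1/4] with ν(B(z, ε)) > 0 and ν{x : dist(x, z) = ε} = 0. Assume the process satisfies an extreme value law in the following sense: for every τ > 0 and every sequence of reals (v_m) such that m · ℙ(X_0 > v_m) → τ, one has ℙ(M_m ≤ v_m) → e^{−τ}. Then, with b_m = log(m · ν(B(z, ε)) / ε), for every u ∈ ℝ one has ℙ(M_m ≤ u + b_m) → exp(−e^{−u}) as m → ∞ (the Gumbel law, with scale sequence a_m = 1 and location sequence b_m). -/

import Mathlib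

open MeasureTheory Metric Set Filter Topology

noncomputable section

/-- The uniform (normalized Lebesgue) probability measure on the interval `[-1, 1]`. -/
def unifIcc : Measure ℝ := (2 : ENNReal)⁻¹ • volume.restrict (Set.Icc (-1 : ℝ) 1)

lemma aux_norm_eq {s : ℝ} (h : |s| ≤ 1/2) : ‖(s : AddCircle (1:ℝ))‖ = |s| :=
  (AddCircle.norm_coe_eq_abs_iff 1 one_ne_zero).mpr (by simpa using h)

lemma aux_norm_le (s : ℝ) : ‖(s : AddCircle (1:ℝ))‖ ≤ |s| := by
  rcases le_or_gt |s| (1/2) with h | h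
  · exact (aux_norm_eq h).le
  · calc ‖(s : AddCircle (1:ℝ))‖ ≤ |(1:ℝ)| / 2 := AddCircle.norm_le_half_period 1 one_ne_zero
      _ ≤ |s| := by rw [abs_one]; linarith

lemma aux_exists_rep (y : AddCircle (1:ℝ)) :
    ∃ d : ℝ, (d : AddCircle (1:ℝ)) = y ∧ |d| ≤ 1/2 ∧ ‖y‖ = |d| := by
  obtain ⟨d₀, rfl⟩ := QuotientAddGroup.mk_surjective y
  have hz : ((round d₀ : ℝ) : AddCircle (1:ℝ)) = 0 :=
    (AddCircle.coe_eq_zero_iff 1).mpr ⟨round d₀, by simp⟩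
  have hcoe : ((d₀ - round d₀ : ℝ) : AddCircle (1:ℝ)) = (d₀ : AddCircle (1:ℝ)) := by
    rw [AddCircle.coe_sub, hz, sub_zero]
  exact ⟨d₀ - round d₀, hcoe, abs_sub_round d₀,
    by rw [← hcoe, aux_norm_eq (abs_sub_round d₀)]⟩

lemma aux_norm_big {s : ℝ} (h1 : 1/2 < |s|) (h2 : |s| ≤ 3/4) :
    1/4 ≤ ‖(s : AddCircle (1:ℝ))‖ := by
  rcases abs_cases s with ⟨he, _⟩ | ⟨he, _⟩
  · have h1' : 1/2 < s := by linarith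
    have h2' : s ≤ 3/4 := by linarith
    have hc : ((s : ℝ) : AddCircle (1:ℝ)) = ((s - 1 : ℝ) : AddCircle (1:ℝ)) := by
      have h := AddCircle.coe_add_period 1 (s - 1)
      rwa [sub_add_cancel] at h
    have h3 : |s - 1| ≤ 1/2 := by rw [abs_le]; constructor <;> linarith
    rw [hc, aux_norm_eq h3]
    rw [abs_le] at h3
    rw [abs_sub_comm, abs_of_nonneg (by linarith : (0:ℝ) ≤ 1 - s)]
    linarith
  · have h1' : s < -(1/2) := by linarith
    have h2' : -(3/4) ≤ s := by linarith
    have hc : ((s : ℝ) : AddCircle (1:ℝ)) = ((s + 1 : ℝ) : AddCircle (1:ℝ)) :=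
      (AddCircle.coe_add_period 1 s).symm
    have h3 : |s + 1| ≤ 1/2 := by rw [abs_le]; constructor <;> linarith
    rw [hc, aux_norm_eq h3, abs_of_nonneg (by linarith : (0:ℝ) ≤ s + 1)]
    linarith

/-- The key pointwise equivalence. -/
lemma aux_mem_iff {ε r d t : ℝ} (hε0 : 0 < ε) (hε : ε ≤ 1/4) (hr : r ≤ 1/4)
    (hd : |d| ≤ 1/2) (ht : |t| ≤ 1) :
    ‖((ε * t : ℝ) : AddCircle (1:ℝ)) - (d : AddCircle (1:ℝ))‖ < r ↔ |ε * t - d| < r := by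
  rw [← AddCircle.coe_sub]
  have hεt : |ε * t| ≤ 1/4 := by
    rw [abs_mul]
    calc |ε| * |t| ≤ (1/4) * 1 :=
          mul_le_mul (by rwa [abs_of_pos hε0]) ht (abs_nonneg t) (by norm_num)
      _ = 1/4 := by norm_num
  have hsb : |ε * t - d| ≤ 3/4 := by
    calc |ε * t - d| ≤ |ε * t| + |d| := abs_sub _ _
      _ ≤ 3/4 := by linarith
  constructor
  · intro h
    rcases le_or_gt |ε * t - d| (1/2) with h2 | h2
    · rwa [aux_norm_eq h2] at h
    · exact absurd h (not_lt.mpr (le_trans hr (aux_norm_big h2 hsb)))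
  · intro h
    exact lt_of_le_of_lt (aux_norm_le _) h

instance : IsProbabilityMeasure unifIcc := by
  constructor
  rw [unifIcc, Measure.smul_apply, Measure.restrict_apply MeasurableSet.univ,
    Set.univ_inter, Real.volume_Icc, smul_eq_mul]
  norm_num
  exact ENNReal.inv_mul_cancel (by norm_num) (by norm_num)

lemma unifIcc_apply (S : Set ℝ) :
    unifIcc S = 2⁻¹ * volume (S ∩ Set.Icc (-1:ℝ) 1) := by
  rw [unifIcc, Measure.smul_apply, Measure.restrict_apply' measurableSet_Icc, smul_eq_mul]

/-- upper bound for the section measure -/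
lemma aux_section_upper {ε r : ℝ} (hε0 : 0 < ε) (hε : ε ≤ 1/4) (hr0 : 0 < r) (hr : r ≤ 1/4)
    (y : AddCircle (1:ℝ)) :
    unifIcc {t : ℝ | ‖((ε * t : ℝ) : AddCircle (1:ℝ)) - y‖ < r} ≤ ENNReal.ofReal (r/ε) := by
  obtain ⟨d, hdy, hd, hnorm⟩ := aux_exists_rep y
  rw [unifIcc_apply]
  have hsub : {t : ℝ | ‖((ε * t : ℝ) : AddCircle (1:ℝ)) - y‖ < r} ∩ Set.Icc (-1:ℝ) 1
      ⊆ Set.Ioo ((d - r)/ε) ((d + r)/ε) := by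
    rintro t ⟨h1, h2⟩
    rw [Set.mem_Icc] at h2
    rw [Set.mem_setOf_eq, ← hdy] at h1
    have ht : |t| ≤ 1 := abs_le.mpr h2
    have h3 : |ε * t - d| < r := (aux_mem_iff hε0 hε hr hd ht).mp h1
    rw [abs_lt] at h3
    constructor
    · rw [div_lt_iff₀ hε0]; linarith [h3.1]
    · rw [lt_div_iff₀ hε0]; linarith [h3.2]
  calc 2⁻¹ * volume ({t : ℝ | ‖((ε * t : ℝ) : AddCircle (1:ℝ)) - y‖ < r} ∩ Set.Icc (-1:ℝ) 1)
      ≤ 2⁻¹ * volume (Set.Ioo ((d - r)/ε) ((d + r)/ε)) :=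
        mul_le_mul_right (measure_mono hsub) _
    _ = ENNReal.ofReal (r/ε) := by
        rw [Real.volume_Ioo]
        have : (d + r)/ε - (d - r)/ε = 2 * (r/ε) := by field_simp; ring
        rw [this, ENNReal.ofReal_mul (by norm_num : (0:ℝ) ≤ 2)]
        rw [ENNReal.ofReal_ofNat, ← mul_assoc, ENNReal.inv_mul_cancel (by norm_num) (by norm_num),
          one_mul]

/-- lower bound for the section measure -/
lemma aux_section_lower {ε r : ℝ} (hε0 : 0 < ε) (hε : ε ≤ 1/4) (hr0 : 0 < r) (hr : r ≤ 1/4)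
    (y : AddCircle (1:ℝ)) (hy : ‖y‖ < ε - r) :
    ENNReal.ofReal (r/ε) ≤ unifIcc {t : ℝ | ‖((ε * t : ℝ) : AddCircle (1:ℝ)) - y‖ < r} := by
  obtain ⟨d, hdy, hd, hnorm⟩ := aux_exists_rep y
  rw [hnorm] at hy
  rw [unifIcc_apply]
  have hsub : Set.Ioo ((d - r)/ε) ((d + r)/ε)
      ⊆ {t : ℝ | ‖((ε * t : ℝ) : AddCircle (1:ℝ)) - y‖ < r} ∩ Set.Icc (-1:ℝ) 1 := by
    rintro t ⟨h1, h2⟩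
    rw [div_lt_iff₀ hε0] at h1
    rw [lt_div_iff₀ hε0] at h2
    have habs : |ε * t - d| < r := abs_lt.mpr ⟨by linarith, by linarith⟩
    have htle : |t| ≤ 1 := by
      rw [abs_le]
      have h3 : |ε * t| < |d| + r := by
        calc |ε * t| = |ε * t - d + d| := by ring_nf
          _ ≤ |ε * t - d| + |d| := abs_add_le _ _
          _ < |d| + r := by linarith
      rw [abs_mul, abs_of_pos hε0] at h3
      have h4 : ε * |t| < ε := by linarith
      have h5 : |t| < 1 := by
        by_contra hcon
        push_neg at hcon
        nlinarith
      exact (abs_le.mp h5.le)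
    refine ⟨?_, Set.mem_Icc.mpr (abs_le.mp htle)⟩
    rw [Set.mem_setOf_eq, ← hdy]
    exact (aux_mem_iff hε0 hε hr hd htle).mpr habs
  calc ENNReal.ofReal (r/ε) = 2⁻¹ * volume (Set.Ioo ((d - r)/ε) ((d + r)/ε)) := by
        rw [Real.volume_Ioo]
        have : (d + r)/ε - (d - r)/ε = 2 * (r/ε) := by field_simp; ring
        rw [this, ENNReal.ofReal_mul (by norm_num : (0:ℝ) ≤ 2)]
        rw [ENNReal.ofReal_ofNat, ← mul_assoc, ENNReal.inv_mul_cancel (by norm_num) (by norm_num),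
          one_mul]
    _ ≤ _ := mul_le_mul_right (measure_mono hsub) _

/-- vanishing of the section measure -/
lemma aux_section_zero {ε r : ℝ} (hε0 : 0 < ε) (hε : ε ≤ 1/4) (hr0 : 0 < r) (hr : r ≤ 1/4)
    (y : AddCircle (1:ℝ)) (hy : ε + r < ‖y‖) :
    unifIcc {t : ℝ | ‖((ε * t : ℝ) : AddCircle (1:ℝ)) - y‖ < r} = 0 := by
  obtain ⟨d, hdy, hd, hnorm⟩ := aux_exists_rep y
  rw [hnorm] at hy
  rw [unifIcc_apply]
  have : {t : ℝ | ‖((ε * t : ℝ) : AddCircle (1:ℝ)) - y‖ < r} ∩ Set.Icc (-1:ℝ) 1 = ∅ := by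
    rw [Set.eq_empty_iff_forall_notMem]
    rintro t ⟨h1, h2⟩
    rw [Set.mem_Icc] at h2
    have ht : |t| ≤ 1 := abs_le.mpr h2
    rw [Set.mem_setOf_eq, ← hdy] at h1
    have h3 : |ε * t - d| < r := (aux_mem_iff hε0 hε hr hd ht).mp h1
    have h4 : |d| ≤ |ε * t| + r := by
      have h5 : |d| ≤ |ε * t| + |ε * t - d| := by
        calc |d| = |ε * t - (ε * t - d)| := by ring_nf
          _ ≤ |ε * t| + |ε * t - d| := abs_sub _ _
      linarith
    have h6 : |ε * t| ≤ ε := by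
      rw [abs_mul, abs_of_pos hε0]
      nlinarith [abs_nonneg t]
    linarith
  rw [this]
  simp

lemma aux_coe_cont : Continuous (fun t : ℝ => ((t : ℝ) : AddCircle (1:ℝ))) :=
  AddCircle.continuous_mk' 1

lemma aux_marginal (ν : Measure (AddCircle (1:ℝ))) [IsProbabilityMeasure ν]
    (Θ : Measure (ℕ → ℝ)) [IsProbabilityMeasure Θ]
    (hΘ : ∀ n : ℕ, Θ.map (fun ξ (i : Fin n) => ξ i) = Measure.pi fun _ : Fin n => unifIcc) :
    (ν.prod Θ).map (fun p : AddCircle (1:ℝ) × (ℕ → ℝ) => (p.1, p.2 0)) = ν.prod unifIcc := by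
  have h1 : (Measure.pi fun _ : Fin 1 => unifIcc).map (fun f : Fin 1 → ℝ => f (0 : Fin 1))
      = unifIcc := by
    ext s hs
    rw [Measure.map_apply (measurable_pi_apply (0 : Fin 1)) hs]
    have hps : (fun f : Fin 1 → ℝ => f (0 : Fin 1)) ⁻¹' s
        = Set.pi Set.univ (fun _ : Fin 1 => s) := by
      ext f
      simp only [Set.mem_preimage, Set.mem_univ_pi]
      exact ⟨fun h i => by rw [Subsingleton.elim i 0]; exact h, fun h => h 0⟩
    rw [hps, Measure.pi_pi]
    simp
  have h0 : Θ.map (fun ξ : ℕ → ℝ => ξ 0) = unifIcc := by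
    have hgf : Measurable (fun (ξ : ℕ → ℝ) (i : Fin 1) => ξ (i : ℕ)) :=
      measurable_pi_lambda _ fun i => measurable_pi_apply _
    have hg : Measurable (fun f : Fin 1 → ℝ => f (0 : Fin 1)) := measurable_pi_apply _
    have hmm : Θ.map (fun ξ : ℕ → ℝ => ξ 0)
        = (Θ.map (fun (ξ : ℕ → ℝ) (i : Fin 1) => ξ (i : ℕ))).map
            (fun f : Fin 1 → ℝ => f (0 : Fin 1)) :=
      (Measure.map_map hg hgf).symm
    rw [hmm, hΘ 1, h1]
  have hfe : (fun p : AddCircle (1:ℝ) × (ℕ → ℝ) => (p.1, p.2 0))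
      = Prod.map id (fun ξ : ℕ → ℝ => ξ 0) := rfl
  rw [hfe, ← Measure.map_prod_map _ _ measurable_id (measurable_pi_apply 0),
    Measure.map_id, h0]

lemma aux_B_meas (z : AddCircle (1:ℝ)) (ε r : ℝ) :
    MeasurableSet {q : AddCircle (1:ℝ) × ℝ |
      dist (q.1 + ((ε * q.2 : ℝ) : AddCircle (1:ℝ))) z < r} := by
  have hcont : Continuous fun q : AddCircle (1:ℝ) × ℝ =>
      dist (q.1 + ((ε * q.2 : ℝ) : AddCircle (1:ℝ))) z :=
    (continuous_fst.add (aux_coe_cont.comp (continuous_const.mul continuous_snd))).dist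
      continuous_const
  exact (isOpen_lt hcont continuous_const).measurableSet

lemma aux_sect_eq (z : AddCircle (1:ℝ)) (ε r : ℝ) (x : AddCircle (1:ℝ)) :
    {t : ℝ | dist (x + ((ε * t : ℝ) : AddCircle (1:ℝ))) z < r}
      = {t : ℝ | ‖((ε * t : ℝ) : AddCircle (1:ℝ)) - (z - x)‖ < r} := by
  ext t
  simp only [Set.mem_setOf_eq, dist_eq_norm]
  have : x + ((ε * t : ℝ) : AddCircle (1:ℝ)) - z
      = ((ε * t : ℝ) : AddCircle (1:ℝ)) - (z - x) := by abel
  rw [this]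

lemma aux_prod_upper (ν : Measure (AddCircle (1:ℝ))) [IsProbabilityMeasure ν]
    (z : AddCircle (1:ℝ)) {ε r : ℝ} (hε0 : 0 < ε) (hε : ε ≤ 1/4) (hr0 : 0 < r) (hr : r ≤ 1/4) :
    (ν.prod unifIcc) {q : AddCircle (1:ℝ) × ℝ |
        dist (q.1 + ((ε * q.2 : ℝ) : AddCircle (1:ℝ))) z < r}
      ≤ ENNReal.ofReal (r/ε) * ν (closedBall z (ε + r)) := by
  rw [Measure.prod_apply (aux_B_meas z ε r)]
  have hbound : ∀ x : AddCircle (1:ℝ),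
      unifIcc (Prod.mk x ⁻¹' {q : AddCircle (1:ℝ) × ℝ |
        dist (q.1 + ((ε * q.2 : ℝ) : AddCircle (1:ℝ))) z < r})
      ≤ (closedBall z (ε + r)).indicator (fun _ => ENNReal.ofReal (r/ε)) x := by
    intro x
    have hpre : Prod.mk x ⁻¹' {q : AddCircle (1:ℝ) × ℝ |
        dist (q.1 + ((ε * q.2 : ℝ) : AddCircle (1:ℝ))) z < r}
        = {t : ℝ | ‖((ε * t : ℝ) : AddCircle (1:ℝ)) - (z - x)‖ < r} := by
      rw [show Prod.mk x ⁻¹' {q : AddCircle (1:ℝ) × ℝ |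
        dist (q.1 + ((ε * q.2 : ℝ) : AddCircle (1:ℝ))) z < r}
        = {t : ℝ | dist (x + ((ε * t : ℝ) : AddCircle (1:ℝ))) z < r} from rfl]
      exact aux_sect_eq z ε r x
    rw [hpre]
    by_cases hx : x ∈ closedBall z (ε + r)
    · rw [Set.indicator_of_mem hx]
      exact aux_section_upper hε0 hε hr0 hr (z - x)
    · rw [Set.indicator_of_notMem hx]
      rw [mem_closedBall, not_le] at hx
      have : ε + r < ‖z - x‖ := by rwa [← dist_eq_norm, dist_comm]
      rw [aux_section_zero hε0 hε hr0 hr (z - x) this]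
  calc ∫⁻ x, unifIcc (Prod.mk x ⁻¹' {q : AddCircle (1:ℝ) × ℝ |
        dist (q.1 + ((ε * q.2 : ℝ) : AddCircle (1:ℝ))) z < r}) ∂ν
      ≤ ∫⁻ x, (closedBall z (ε + r)).indicator (fun _ => ENNReal.ofReal (r/ε)) x ∂ν :=
        lintegral_mono hbound
    _ = ENNReal.ofReal (r/ε) * ν (closedBall z (ε + r)) :=
        lintegral_indicator_const measurableSet_closedBall _

lemma aux_prod_lower (ν : Measure (AddCircle (1:ℝ))) [IsProbabilityMeasure ν]
    (z : AddCircle (1:ℝ)) {ε r : ℝ} (hε0 : 0 < ε) (hε : ε ≤ 1/4) (hr0 : 0 < r) (hr : r ≤ 1/4) :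
    ENNReal.ofReal (r/ε) * ν (ball z (ε - r))
      ≤ (ν.prod unifIcc) {q : AddCircle (1:ℝ) × ℝ |
        dist (q.1 + ((ε * q.2 : ℝ) : AddCircle (1:ℝ))) z < r} := by
  rw [Measure.prod_apply (aux_B_meas z ε r)]
  have hbound : ∀ x : AddCircle (1:ℝ),
      (ball z (ε - r)).indicator (fun _ => ENNReal.ofReal (r/ε)) x
      ≤ unifIcc (Prod.mk x ⁻¹' {q : AddCircle (1:ℝ) × ℝ |
        dist (q.1 + ((ε * q.2 : ℝ) : AddCircle (1:ℝ))) z < r}) := by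
    intro x
    have hpre : Prod.mk x ⁻¹' {q : AddCircle (1:ℝ) × ℝ |
        dist (q.1 + ((ε * q.2 : ℝ) : AddCircle (1:ℝ))) z < r}
        = {t : ℝ | ‖((ε * t : ℝ) : AddCircle (1:ℝ)) - (z - x)‖ < r} := by
      rw [show Prod.mk x ⁻¹' {q : AddCircle (1:ℝ) × ℝ |
        dist (q.1 + ((ε * q.2 : ℝ) : AddCircle (1:ℝ))) z < r}
        = {t : ℝ | dist (x + ((ε * t : ℝ) : AddCircle (1:ℝ))) z < r} from rfl]
      exact aux_sect_eq z ε r x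
    rw [hpre]
    by_cases hx : x ∈ ball z (ε - r)
    · rw [Set.indicator_of_mem hx]
      rw [mem_ball] at hx
      have : ‖z - x‖ < ε - r := by rwa [← dist_eq_norm, dist_comm]
      exact aux_section_lower hε0 hε hr0 hr (z - x) this
    · rw [Set.indicator_of_notMem hx]
      exact zero_le
  calc ENNReal.ofReal (r/ε) * ν (ball z (ε - r))
      = ∫⁻ x, (ball z (ε - r)).indicator (fun _ => ENNReal.ofReal (r/ε)) x ∂ν :=
        (lintegral_indicator_const measurableSet_ball _).symm
    _ ≤ _ := lintegral_mono hbound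

lemma aux_null (ν : Measure (AddCircle (1:ℝ))) [IsProbabilityMeasure ν]
    (z : AddCircle (1:ℝ)) {ε : ℝ} (hε0 : 0 < ε) :
    (ν.prod unifIcc) {q : AddCircle (1:ℝ) × ℝ |
      q.1 + ((ε * q.2 : ℝ) : AddCircle (1:ℝ)) = z} = 0 := by
  have hZ : MeasurableSet {q : AddCircle (1:ℝ) × ℝ |
      q.1 + ((ε * q.2 : ℝ) : AddCircle (1:ℝ)) = z} := by
    have hcont : Continuous fun q : AddCircle (1:ℝ) × ℝ =>
        q.1 + ((ε * q.2 : ℝ) : AddCircle (1:ℝ)) :=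
      continuous_fst.add (aux_coe_cont.comp (continuous_const.mul continuous_snd))
    exact (isClosed_eq hcont continuous_const).measurableSet
  rw [Measure.prod_apply hZ]
  have hsec : ∀ x : AddCircle (1:ℝ),
      unifIcc (Prod.mk x ⁻¹' {q : AddCircle (1:ℝ) × ℝ |
        q.1 + ((ε * q.2 : ℝ) : AddCircle (1:ℝ)) = z}) = 0 := by
    intro x
    obtain ⟨d, hdy, hd, hnorm⟩ := aux_exists_rep (z - x)
    have hsub : Prod.mk x ⁻¹' {q : AddCircle (1:ℝ) × ℝ |
        q.1 + ((ε * q.2 : ℝ) : AddCircle (1:ℝ)) = z}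
        ⊆ Set.range (fun k : ℤ => (d + k)/ε) := by
      intro t ht
      have h1 : x + ((ε * t : ℝ) : AddCircle (1:ℝ)) = z := ht
      have h2 : ((ε * t : ℝ) : AddCircle (1:ℝ)) = z - x := by
        rw [← h1]; abel
      have h3 : ((ε * t - d : ℝ) : AddCircle (1:ℝ)) = 0 := by
        rw [AddCircle.coe_sub, h2, hdy, sub_self]
      obtain ⟨n, hn⟩ := (AddCircle.coe_eq_zero_iff 1).mp h3
      refine ⟨n, ?_⟩
      have : ε * t = d + n := by
        have : (n : ℝ) = ε * t - d := by rw [← hn]; simp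
        linarith
      field_simp [this]
      linarith
    have : volume (Prod.mk x ⁻¹' {q : AddCircle (1:ℝ) × ℝ |
        q.1 + ((ε * q.2 : ℝ) : AddCircle (1:ℝ)) = z} ∩ Set.Icc (-1:ℝ) 1) = 0 := by
      apply measure_mono_null (Set.inter_subset_left.trans hsub)
      exact Set.Countable.measure_zero (Set.countable_range _) volume
    rw [unifIcc_apply, this, mul_zero]
  simp only [hsec]
  exact lintegral_zero

/-- The observable process on the circle:
`X_i(x, ξ̄) = -log dist(T^i x + ε ξ_i, z)`. -/
def X1 (T : AddCircle (1 : ℝ) → AddCircle (1 : ℝ)) (z : AddCircle (1 : ℝ)) (ε : ℝ) (i : ℕ)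
    (p : AddCircle (1 : ℝ) × (ℕ → ℝ)) : ℝ :=
  - Real.log (dist (T^[i] p.1 + ((ε * p.2 i : ℝ) : AddCircle (1 : ℝ))) z)

/-- `Θ` is the infinite product measure `θ^{⊗ℕ}`: every finite-dimensional marginal of `Θ`
is the corresponding finite product of copies of `θ`. -/
def IsIIDProduct1 (θ : Measure ℝ) (Θ : Measure (ℕ → ℝ)) : Prop :=
  ∀ n : ℕ, Θ.map (fun ξ (i : Fin n) => ξ i) = Measure.pi fun _ : Fin n => θ

lemma aux_Xid (T : AddCircle (1 : ℝ) → AddCircle (1 : ℝ))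
    (ν : Measure (AddCircle (1:ℝ))) [IsProbabilityMeasure ν]
    (Θ : Measure (ℕ → ℝ)) [IsProbabilityMeasure Θ]
    (hΘ : IsIIDProduct1 unifIcc Θ)
    (z : AddCircle (1:ℝ)) {ε : ℝ} (hε0 : 0 < ε) {v : ℝ} (hv : 0 < v) :
    (ν.prod Θ) {p | v < X1 T z ε 0 p}
      = (ν.prod unifIcc) {q : AddCircle (1:ℝ) × ℝ |
          dist (q.1 + ((ε * q.2 : ℝ) : AddCircle (1:ℝ))) z < Real.exp (-v)} := by
  have hcont : Continuous fun q : AddCircle (1:ℝ) × ℝ =>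
      dist (q.1 + ((ε * q.2 : ℝ) : AddCircle (1:ℝ))) z :=
    (continuous_fst.add (aux_coe_cont.comp (continuous_const.mul continuous_snd))).dist
      continuous_const
  have hD : MeasurableSet {q : AddCircle (1:ℝ) × ℝ |
      v < -Real.log (dist (q.1 + ((ε * q.2 : ℝ) : AddCircle (1:ℝ))) z)} :=
    measurableSet_lt measurable_const (Real.measurable_log.comp hcont.measurable).neg
  have hF : Measurable (fun p : AddCircle (1:ℝ) × (ℕ → ℝ) => (p.1, p.2 0)) :=
    measurable_fst.prodMk ((measurable_pi_apply 0).comp measurable_snd)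
  have hpre : {p : AddCircle (1:ℝ) × (ℕ → ℝ) | v < X1 T z ε 0 p}
      = (fun p : AddCircle (1:ℝ) × (ℕ → ℝ) => (p.1, p.2 0)) ⁻¹'
        {q : AddCircle (1:ℝ) × ℝ |
          v < -Real.log (dist (q.1 + ((ε * q.2 : ℝ) : AddCircle (1:ℝ))) z)} := by
    ext p
    simp only [X1, Function.iterate_zero_apply, Set.mem_setOf_eq, Set.mem_preimage]
  rw [hpre, ← Measure.map_apply hF hD, aux_marginal ν Θ hΘ]
  have hset : {q : AddCircle (1:ℝ) × ℝ |
      v < -Real.log (dist (q.1 + ((ε * q.2 : ℝ) : AddCircle (1:ℝ))) z)}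
      = {q : AddCircle (1:ℝ) × ℝ |
          dist (q.1 + ((ε * q.2 : ℝ) : AddCircle (1:ℝ))) z < Real.exp (-v)}
        \ {q : AddCircle (1:ℝ) × ℝ | q.1 + ((ε * q.2 : ℝ) : AddCircle (1:ℝ)) = z} := by
    ext q
    simp only [Set.mem_setOf_eq, Set.mem_diff]
    constructor
    · intro hq
      have hd0 : dist (q.1 + ((ε * q.2 : ℝ) : AddCircle (1:ℝ))) z ≠ 0 := by
        intro h0
        rw [h0, Real.log_zero, neg_zero] at hq
        exact absurd hq (not_lt.mpr hv.le)
      have hdpos : 0 < dist (q.1 + ((ε * q.2 : ℝ) : AddCircle (1:ℝ))) z :=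
        lt_of_le_of_ne dist_nonneg (Ne.symm hd0)
      refine ⟨?_, fun h => hd0 (by rw [dist_eq_zero]; exact h)⟩
      have hlog : Real.log (dist (q.1 + ((ε * q.2 : ℝ) : AddCircle (1:ℝ))) z) < -v := by
        linarith
      calc dist (q.1 + ((ε * q.2 : ℝ) : AddCircle (1:ℝ))) z
          = Real.exp (Real.log (dist (q.1 + ((ε * q.2 : ℝ) : AddCircle (1:ℝ))) z)) :=
            (Real.exp_log hdpos).symm
        _ < Real.exp (-v) := Real.exp_lt_exp.mpr hlog
    · rintro ⟨h1, h2⟩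
      have hdpos : 0 < dist (q.1 + ((ε * q.2 : ℝ) : AddCircle (1:ℝ))) z :=
        lt_of_le_of_ne dist_nonneg (fun h => h2 (dist_eq_zero.mp h.symm))
      have := Real.log_lt_log hdpos h1
      rw [Real.log_exp] at this
      linarith
  rw [hset, measure_diff_null (aux_null ν z hε0)]

lemma aux_ball_tendsto (ν : Measure (AddCircle (1:ℝ))) [IsProbabilityMeasure ν]
    (z : AddCircle (1:ℝ)) {ε c : ℝ} (hc : 0 < c) :
    Tendsto (fun m : ℕ => (ν (ball z (ε - c/(m:ℝ)))).toReal) atTop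
      (𝓝 ((ν (ball z ε)).toReal)) := by
  apply (tendsto_add_atTop_iff_nat 1).mp
  have hmono : Monotone (fun n : ℕ => ball z (ε - c/((n:ℝ)+1))) := by
    intro a b hab
    apply ball_subset_ball
    have h1 : c/((b:ℝ)+1) ≤ c/((a:ℝ)+1) := by
      apply div_le_div_of_nonneg_left hc.le (by positivity)
      have : (a:ℝ) ≤ (b:ℝ) := Nat.cast_le.mpr hab
      linarith
    linarith
  have hunion : (⋃ n : ℕ, ball z (ε - c/((n:ℝ)+1))) = ball z ε := by
    apply Set.Subset.antisymm
    · apply Set.iUnion_subset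
      intro n
      apply ball_subset_ball
      have : 0 < c/((n:ℝ)+1) := by positivity
      linarith
    · intro x hx
      rw [mem_ball] at hx
      obtain ⟨n, hn⟩ := exists_nat_gt (c/(ε - dist x z))
      refine Set.mem_iUnion.mpr ⟨n, ?_⟩
      rw [mem_ball]
      have hd : 0 < ε - dist x z := by linarith
      have h2 : c/((n:ℝ)+1) < ε - dist x z := by
        rw [div_lt_iff₀ (by positivity)]
        rw [div_lt_iff₀ hd] at hn
        nlinarith
      linarith
  have h1 := tendsto_measure_iUnion_atTop (μ := ν) hmono
  rw [hunion] at h1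
  have h2 := (ENNReal.tendsto_toReal (measure_ne_top ν (ball z ε))).comp h1
  simpa [Function.comp_def] using h2

lemma aux_cball_tendsto (ν : Measure (AddCircle (1:ℝ))) [IsProbabilityMeasure ν]
    (z : AddCircle (1:ℝ)) {ε c : ℝ} (hc : 0 < c) :
    Tendsto (fun m : ℕ => (ν (closedBall z (ε + c/(m:ℝ)))).toReal) atTop
      (𝓝 ((ν (closedBall z ε)).toReal)) := by
  apply (tendsto_add_atTop_iff_nat 1).mp
  have hanti : Antitone (fun n : ℕ => closedBall z (ε + c/((n:ℝ)+1))) := by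
    intro a b hab
    apply closedBall_subset_closedBall
    have h1 : c/((b:ℝ)+1) ≤ c/((a:ℝ)+1) := by
      apply div_le_div_of_nonneg_left hc.le (by positivity)
      have : (a:ℝ) ≤ (b:ℝ) := Nat.cast_le.mpr hab
      linarith
    linarith
  have hinter : (⋂ n : ℕ, closedBall z (ε + c/((n:ℝ)+1))) = closedBall z ε := by
    apply Set.Subset.antisymm
    · intro x hx
      rw [mem_closedBall]
      apply le_of_forall_pos_le_add
      intro δ hδ
      obtain ⟨n, hn⟩ := exists_nat_gt (c/δ)
      have hmem := Set.mem_iInter.mp hx n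
      rw [mem_closedBall] at hmem
      have h2 : c/((n:ℝ)+1) < δ := by
        rw [div_lt_iff₀ (by positivity)]
        rw [div_lt_iff₀ hδ] at hn
        nlinarith
      linarith
    · intro x hx
      apply Set.mem_iInter.mpr
      intro n
      apply closedBall_subset_closedBall _ hx
      have : 0 < c/((n:ℝ)+1) := by positivity
      linarith
  have h1 := tendsto_measure_iInter_atTop (μ := ν)
    (fun n => measurableSet_closedBall.nullMeasurableSet) hanti
    ⟨0, measure_ne_top ν _⟩
  rw [hinter] at h1
  have h2 := (ENNReal.tendsto_toReal (measure_ne_top ν (closedBall z ε))).comp h1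
  simpa [Function.comp_def] using h2

/-- On the circle, with `θ` uniform on `[-1,1]`, `ε ∈ (0, 1/4]`,
`ν(B(z,ε)) > 0` and `ν{dist(·,z) = ε} = 0`, suppose the process satisfies an extreme value
law: for every `τ > 0` and every sequence `(v_m)` with `m·ℙ(X_0 > v_m) → τ`, one has
`ℙ(M_m ≤ v_m) → e^{−τ}`. Then, with `b_m = log(m ν(B(z,ε))/ε)`, for every `u`,
`ℙ(M_m ≤ u + b_m) → exp(−e^{−u})` (the Gumbel law, with `a_m = 1`). -/
theorem statement_8 (T : AddCircle (1 : ℝ) → AddCircle (1 : ℝ)) (hT : Measurable T)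
    (ν : Measure (AddCircle (1 : ℝ))) [IsProbabilityMeasure ν]
    (Θ : Measure (ℕ → ℝ)) [IsProbabilityMeasure Θ]
    (hΘ : IsIIDProduct1 unifIcc Θ)
    (z : AddCircle (1 : ℝ)) (ε : ℝ) (hε0 : 0 < ε) (hε : ε ≤ 1 / 4)
    (hpos : 0 < ν (Metric.ball z ε))
    (hbd : ν {x | dist x z = ε} = 0)
    (hEVL : ∀ τ : ℝ, 0 < τ → ∀ v : ℕ → ℝ,
      Tendsto (fun m : ℕ =>
          (m : ℝ) * ((ν.prod Θ) {p | v m < X1 T z ε 0 p}).toReal) atTop (𝓝 τ) →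
      Tendsto (fun m : ℕ =>
          ((ν.prod Θ) {p | ∀ i < m, X1 T z ε i p ≤ v m}).toReal) atTop (𝓝 (Real.exp (-τ))))
    (u : ℝ) :
    Tendsto (fun m : ℕ =>
        ((ν.prod Θ) {p | ∀ i < m, X1 T z ε i p ≤
          u + Real.log ((m : ℝ) * (ν (Metric.ball z ε)).toReal / ε)}).toReal)
      atTop (𝓝 (Real.exp (-Real.exp (-u)))) := by
  have hBfin : ν (Metric.ball z ε) ≠ ⊤ := measure_ne_top ν _
  set B : ℝ := (ν (Metric.ball z ε)).toReal with hBdef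
  have hB : 0 < B := ENNReal.toReal_pos hpos.ne' hBfin
  set c : ℝ := Real.exp (-u) * ε / B with hcdef
  have hc : 0 < c := by positivity
  set v : ℕ → ℝ := fun m => u + Real.log ((m : ℝ) * B / ε) with hvdef
  -- the exponential identity
  have hexp : ∀ m : ℕ, 1 ≤ m → Real.exp (-(v m)) = c / (m : ℝ) := by
    intro m hm
    have hm0 : 0 < (m:ℝ) := by exact_mod_cast hm
    have harg : 0 < (m:ℝ) * B / ε := by positivity
    rw [hvdef]
    simp only
    rw [neg_add, Real.exp_add, Real.exp_neg (Real.log ((m:ℝ) * B / ε)), Real.exp_log harg,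
      hcdef]
    field_simp
  -- eventual positivity of v m
  have hv_pos : ∀ᶠ m : ℕ in atTop, 0 < v m := by
    have htend : Tendsto (fun m : ℕ => Real.log ((m:ℝ) * B / ε)) atTop atTop := by
      apply Real.tendsto_log_atTop.comp
      have : (fun m : ℕ => (m:ℝ) * B / ε) = fun m : ℕ => (m:ℝ) * (B / ε) := by
        funext m; ring
      rw [this]
      exact tendsto_natCast_atTop_atTop.atTop_mul_const (div_pos hB hε0)
    filter_upwards [htend.eventually_gt_atTop (-u)] with m hm
    rw [hvdef]
    simp only
    linarith
  -- eventual smallness of c/m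
  have hr_small : ∀ᶠ m : ℕ in atTop, c/(m:ℝ) ≤ 1/4 := by
    have := tendsto_const_div_atTop_nhds_zero_nat c
    filter_upwards [this.eventually_le_const (by norm_num : (0:ℝ) < 1/4)] with m hm
    exact hm
  -- main squeeze
  have hsq : ∀ᶠ m : ℕ in atTop,
      (Real.exp (-u)/B) * (ν (ball z (ε - c/(m:ℝ)))).toReal
        ≤ (m:ℝ) * ((ν.prod Θ) {p | v m < X1 T z ε 0 p}).toReal
      ∧ (m:ℝ) * ((ν.prod Θ) {p | v m < X1 T z ε 0 p}).toReal
        ≤ (Real.exp (-u)/B) * (ν (closedBall z (ε + c/(m:ℝ)))).toReal := by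
    filter_upwards [eventually_ge_atTop 1, hv_pos, hr_small] with m hm hvp hrs
    have hm0 : 0 < (m:ℝ) := by exact_mod_cast hm
    have hr0 : 0 < c/(m:ℝ) := div_pos hc hm0
    have hPeq : (ν.prod Θ) {p | v m < X1 T z ε 0 p}
        = (ν.prod unifIcc) {q : AddCircle (1:ℝ) × ℝ |
            dist (q.1 + ((ε * q.2 : ℝ) : AddCircle (1:ℝ))) z < c/(m:ℝ)} := by
      rw [aux_Xid T ν Θ hΘ z hε0 hvp, hexp m hm]
    have hup := aux_prod_upper ν z hε0 hε hr0 hrs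
    have hlo := aux_prod_lower ν z hε0 hε hr0 hrs
    have hcoef : (m:ℝ) * (c/(m:ℝ)/ε) = Real.exp (-u)/B := by
      rw [hcdef]
      field_simp
    have htR : ∀ (S : Set (AddCircle (1:ℝ))),
        (ENNReal.ofReal (c/(m:ℝ)/ε) * ν S).toReal = (c/(m:ℝ)/ε) * (ν S).toReal := by
      intro S
      rw [ENNReal.toReal_mul, ENNReal.toReal_ofReal (by positivity)]
    constructor
    · -- lower bound
      have h1 : (ENNReal.ofReal (c/(m:ℝ)/ε) * ν (ball z (ε - c/(m:ℝ)))).toReal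
          ≤ ((ν.prod unifIcc) {q : AddCircle (1:ℝ) × ℝ |
            dist (q.1 + ((ε * q.2 : ℝ) : AddCircle (1:ℝ))) z < c/(m:ℝ)}).toReal :=
        ENNReal.toReal_mono (measure_ne_top _ _) hlo
      rw [htR] at h1
      rw [hPeq]
      calc (Real.exp (-u)/B) * (ν (ball z (ε - c/(m:ℝ)))).toReal
          = (m:ℝ) * ((c/(m:ℝ)/ε) * (ν (ball z (ε - c/(m:ℝ)))).toReal) := by
            rw [← mul_assoc, hcoef]
        _ ≤ _ := by
            apply mul_le_mul_of_nonneg_left h1 hm0.le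
    · -- upper bound
      have h1 : ((ν.prod unifIcc) {q : AddCircle (1:ℝ) × ℝ |
            dist (q.1 + ((ε * q.2 : ℝ) : AddCircle (1:ℝ))) z < c/(m:ℝ)}).toReal
          ≤ (ENNReal.ofReal (c/(m:ℝ)/ε) * ν (closedBall z (ε + c/(m:ℝ)))).toReal :=
        ENNReal.toReal_mono (ENNReal.mul_ne_top ENNReal.ofReal_ne_top (measure_ne_top _ _)) hup
      rw [htR] at h1
      rw [hPeq]
      calc (m:ℝ) * ((ν.prod unifIcc) {q : AddCircle (1:ℝ) × ℝ |
            dist (q.1 + ((ε * q.2 : ℝ) : AddCircle (1:ℝ))) z < c/(m:ℝ)}).toReal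
          ≤ (m:ℝ) * ((c/(m:ℝ)/ε) * (ν (closedBall z (ε + c/(m:ℝ)))).toReal) :=
            mul_le_mul_of_nonneg_left h1 hm0.le
        _ = (Real.exp (-u)/B) * (ν (closedBall z (ε + c/(m:ℝ)))).toReal := by
            rw [← mul_assoc, hcoef]
  -- limits of the two bounds
  have hcball : ν (closedBall z ε) = ν (ball z ε) := by
    apply le_antisymm
    · calc ν (closedBall z ε) ≤ ν (ball z ε ∪ {x | dist x z = ε}) := by
            apply measure_mono
            intro x hx
            rcases lt_or_eq_of_le (mem_closedBall.mp hx) with h | h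
            · exact Or.inl (mem_ball.mpr h)
            · exact Or.inr h
        _ ≤ ν (ball z ε) + ν {x | dist x z = ε} := measure_union_le _ _
        _ = ν (ball z ε) := by rw [hbd, add_zero]
    · exact measure_mono ball_subset_closedBall
  have hLlim : Tendsto (fun m : ℕ => (Real.exp (-u)/B) * (ν (ball z (ε - c/(m:ℝ)))).toReal)
      atTop (𝓝 (Real.exp (-u))) := by
    have h1 := (aux_ball_tendsto ν z (ε := ε) hc).const_mul (Real.exp (-u)/B)
    rw [← hBdef] at h1
    have : Real.exp (-u)/B * B = Real.exp (-u) := by field_simp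
    rwa [this] at h1
  have hUlim : Tendsto (fun m : ℕ => (Real.exp (-u)/B) * (ν (closedBall z (ε + c/(m:ℝ)))).toReal)
      atTop (𝓝 (Real.exp (-u))) := by
    have h1 := (aux_cball_tendsto ν z (ε := ε) hc).const_mul (Real.exp (-u)/B)
    rw [hcball, ← hBdef] at h1
    have : Real.exp (-u)/B * B = Real.exp (-u) := by field_simp
    rwa [this] at h1
  have main : Tendsto (fun m : ℕ =>
      (m : ℝ) * ((ν.prod Θ) {p | v m < X1 T z ε 0 p}).toReal) atTop (𝓝 (Real.exp (-u))) :=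
    tendsto_of_tendsto_of_tendsto_of_le_of_le' hLlim hUlim
      (hsq.mono fun m h => h.1) (hsq.mono fun m h => h.2)
  exact hEVL (Real.exp (-u)) (Real.exp_pos _) v main
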